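/- Let X and Y be topological spaces, Y a convex subset of a topological vector space, and let P : X → 2^Y be a correspondence with open lower sections. Then the correspondence co P : X → 2^Y defined by (co P)(x) = co(P(x)) also has open lower sections. -/

import Mathlib

/-- Shafer–Sonnenschein Lemma 5.1: if `P : X → 2^Y` has open lower sections,
where `Y` is a convex subset of a topological vector space, then so does
`co P`. -/
theorem stmt10 {X E : Type*} [TopologicalSpace X] [AddCommGroup E] [Module ℝ E]
    [TopologicalSpace E] [IsTopologicalAddGroup E] [ContinuousSMul ℝ E]
    (Y : Set E) (hY : Convex ℝ Y) (P : X → Set E) (hPY : ∀ x, P x ⊆ Y)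
    (hop : ∀ y ∈ Y, IsOpen {x : X | y ∈ P x}) :
    ∀ y ∈ Y, IsOpen {x : X | y ∈ convexHull ℝ (P x)} := by
  intro y hy
  rw [isOpen_iff_forall_mem_open]
  intro x hx
  have hx' : y ∈ ⋃ (t : Finset E) (_ : ↑t ⊆ P x), convexHull ℝ (↑t : Set E) := by
    rwa [← convexHull_eq_union_convexHull_finite_subsets]
  simp only [Set.mem_iUnion] at hx'
  obtain ⟨t, ht, hyt⟩ := hx'
  refine ⟨⋂ z ∈ t, {x' : X | z ∈ P x'}, ?_, ?_, ?_⟩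
  · intro x' hx'
    simp only [Set.mem_iInter] at hx'
    have : (↑t : Set E) ⊆ P x' := fun z hz => hx' z hz
    exact convexHull_mono this hyt
  · exact isOpen_biInter_finset fun z hz => hop z (hPY x (ht hz))
  · simp only [Set.mem_iInter]
    exact fun z hz => ht hz
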